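/- Let 0 < λ < 1, 0 < η < 1 and sufficiently small ε > 0, and Q_ε = Q_c + εQ_q as above. Then Q_ε is positive definite; in particular Q_ε is a symmetric matrix with trace 1 that is positive semidefinite with strictly positive determinant. -/

import Mathlib

set_option maxHeartbeats 1000000

lemma Qeps_aux (lam eta eps a b c d u : ℝ) (hlam : 0 < lam) (hlam1 : lam < 1)
    (heta : 0 < eta) (heta1 : eta < 1) (hu : u ^ 2 = 1 - lam ^ 2) (hu0 : 0 < u)
    (heps : 0 < eps) (heps1 : eps < lam ^ 2 * (1 - lam ^ 2) * min eta (1 - eta) / 200)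
    (hx : ¬(a = 0 ∧ b = 0 ∧ c = 0 ∧ d = 0)) :
    0 < ((1 + lam) ^ 2 * a ^ 2 + (1 - lam ^ 2) * (b ^ 2 + c ^ 2) + (1 - lam) ^ 2 * d ^ 2
        + 2 * eta * u * (1 + lam) * a * c + 2 * eta * u * (1 - lam) * b * d
        + 2 * (1 - eta) * (1 - lam ^ 2) * (a * d + b * c)) / 4
      + eps * ((a - d) ^ 2 - (b - c) ^ 2) := by
  have h1l : (0:ℝ) < 1 + lam := by linarith
  have h1l' : (0:ℝ) < 1 - lam := by linarith
  have hm0 : (0:ℝ) < 1 - lam ^ 2 := by nlinarith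
  have h1e : (0:ℝ) < 1 - eta := by linarith
  have hK : (0:ℝ) < lam ^ 2 * (1 - lam ^ 2) ^ 2 := by positivity
  have hmin1 : min eta (1 - eta) ≤ eta := min_le_left _ _
  have hmin2 : min eta (1 - eta) ≤ 1 - eta := min_le_right _ _
  have hmin3 : min eta (1 - eta) ≤ 1 := by
    calc min eta (1 - eta) ≤ eta := hmin1
    _ ≤ 1 := by linarith
  have hb1 : eps < lam ^ 2 * (1 - lam ^ 2) * eta / 200 := by
    refine lt_of_lt_of_le heps1 ?_
    have : lam ^ 2 * (1 - lam ^ 2) * min eta (1 - eta) ≤ lam ^ 2 * (1 - lam ^ 2) * eta := by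
      apply mul_le_mul_of_nonneg_left hmin1; positivity
    linarith
  have hb2 : eps < lam ^ 2 * (1 - lam ^ 2) * (1 - eta) / 200 := by
    refine lt_of_lt_of_le heps1 ?_
    have : lam ^ 2 * (1 - lam ^ 2) * min eta (1 - eta) ≤ lam ^ 2 * (1 - lam ^ 2) * (1 - eta) := by
      apply mul_le_mul_of_nonneg_left hmin2; positivity
    linarith
  have hb3 : eps < lam ^ 2 * (1 - lam ^ 2) / 200 := by
    refine lt_of_lt_of_le heps1 ?_
    have : lam ^ 2 * (1 - lam ^ 2) * min eta (1 - eta) ≤ lam ^ 2 * (1 - lam ^ 2) * 1 := by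
      apply mul_le_mul_of_nonneg_left hmin3; positivity
    linarith
  -- main identity
  have I : lam ^ 2 * (1 - lam ^ 2) ^ 2 *
      (8 * (((1 + lam) ^ 2 * a ^ 2 + (1 - lam ^ 2) * (b ^ 2 + c ^ 2) + (1 - lam) ^ 2 * d ^ 2
        + 2 * eta * u * (1 + lam) * a * c + 2 * eta * u * (1 - lam) * b * d
        + 2 * (1 - eta) * (1 - lam ^ 2) * (a * d + b * c)) / 4
      + eps * ((a - d) ^ 2 - (b - c) ^ 2)))
      = lam ^ 2 * (1 - lam ^ 2) ^ 2 *
          (((1 + lam) * a + u * b + u * c + (1 - lam) * d) ^ 2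
            + eta * ((1 + lam) * a - u * b + u * c - (1 - lam) * d) ^ 2
            + (1 - eta) * ((1 + lam) * a - u * b - u * c + (1 - lam) * d) ^ 2)
        + 2 * eps *
          ((lam ^ 2 * ((1 + lam) * a + u * b - u * c - (1 - lam) * d)
              + (2 - lam ^ 2) * ((1 + lam) * a - u * b + u * c - (1 - lam) * d)
              - lam * (((1 + lam) * a + u * b + u * c + (1 - lam) * d)
                  + ((1 + lam) * a - u * b - u * c + (1 - lam) * d))) ^ 2
            - (1 - lam ^ 2) *
              (2 * ((1 + lam) * a - u * b + u * c - (1 - lam) * d)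
                - lam * (((1 + lam) * a + u * b + u * c + (1 - lam) * d)
                    + ((1 + lam) * a - u * b - u * c + (1 - lam) * d))) ^ 2) := by
    linear_combination (lam ^ 2 * (1 - lam ^ 2) ^ 2 * (-2 * b ^ 2 - 2 * c ^ 2 - (4 - 4 * eta) * b * c)
      + 8 * eps * lam ^ 2 * (1 - lam ^ 2) * (b - c) ^ 2) * hu
  obtain ⟨p, hp⟩ : ∃ p : ℝ, p = (1 + lam) * a + u * b + u * c + (1 - lam) * d := ⟨_, rfl⟩
  obtain ⟨q, hq⟩ : ∃ q : ℝ, q = (1 + lam) * a - u * b + u * c - (1 - lam) * d := ⟨_, rfl⟩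
  obtain ⟨r, hr⟩ : ∃ r : ℝ, r = (1 + lam) * a - u * b - u * c + (1 - lam) * d := ⟨_, rfl⟩
  obtain ⟨z, hz⟩ : ∃ z : ℝ, z = (1 + lam) * a + u * b - u * c - (1 - lam) * d := ⟨_, rfl⟩
  rw [← hp, ← hq, ← hr, ← hz] at I
  -- not all of p,q,r,z are zero
  have hzero : ¬(p = 0 ∧ q = 0 ∧ r = 0 ∧ z = 0) := by
    rintro ⟨h1, h2, h3, h4⟩
    apply hx
    have ha : a = 0 := by
      have h : 4 * (1 + lam) * a = 0 := by
        linear_combination h1 + h2 + h3 + h4 - hp - hq - hr - hz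
      exact (mul_eq_zero.mp h).resolve_left (by positivity)
    have hb : b = 0 := by
      have h : 4 * u * b = 0 := by
        linear_combination h1 - h2 - h3 + h4 - hp + hq + hr - hz
      exact (mul_eq_zero.mp h).resolve_left (by positivity)
    have hc : c = 0 := by
      have h : 4 * u * c = 0 := by
        linear_combination h1 + h2 - h3 - h4 - hp - hq + hr + hz
      exact (mul_eq_zero.mp h).resolve_left (by positivity)
    have hd : d = 0 := by
      have h : 4 * (1 - lam) * d = 0 := by
        linear_combination h1 - h2 + h3 - h4 - hp + hq - hr + hz
      exact (mul_eq_zero.mp h).resolve_left (by positivity)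
    exact ⟨ha, hb, hc, hd⟩
  -- reduce to the scaled statement
  by_contra hcon
  push_neg at hcon
  have hscaled : lam ^ 2 * (1 - lam ^ 2) ^ 2 *
      (8 * (((1 + lam) ^ 2 * a ^ 2 + (1 - lam ^ 2) * (b ^ 2 + c ^ 2) + (1 - lam) ^ 2 * d ^ 2
        + 2 * eta * u * (1 + lam) * a * c + 2 * eta * u * (1 - lam) * b * d
        + 2 * (1 - eta) * (1 - lam ^ 2) * (a * d + b * c)) / 4
      + eps * ((a - d) ^ 2 - (b - c) ^ 2))) ≤ 0 :=
    mul_nonpos_of_nonneg_of_nonpos hK.le (by linarith only [hcon])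
  rw [I] at hscaled
  -- now derive a contradiction: show the RHS is strictly positive
  have hsq : (2 * q - lam * (p + r)) ^ 2 ≤ 12 * q ^ 2 + 3 * p ^ 2 + 3 * r ^ 2 := by
    nlinarith only [sq_nonneg (2 * q + lam * p), sq_nonneg (2 * q + lam * r),
      sq_nonneg (lam * p - lam * r), mul_nonneg hm0.le (sq_nonneg p),
      mul_nonneg hm0.le (sq_nonneg r), sq_nonneg (p - r), sq_nonneg (p + r),
      hlam, hlam1, hm0]
  have c1 : 2 * eps * ((1 - lam ^ 2) * (2 * q - lam * (p + r)) ^ 2)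
      ≤ 2 * eps * ((1 - lam ^ 2) * (12 * q ^ 2 + 3 * p ^ 2 + 3 * r ^ 2)) := by
    apply mul_le_mul_of_nonneg_left _ (by positivity)
    exact mul_le_mul_of_nonneg_left hsq hm0.le
  have c2 : eps * ((1 - lam ^ 2) * q ^ 2)
      ≤ lam ^ 2 * (1 - lam ^ 2) * eta / 200 * ((1 - lam ^ 2) * q ^ 2) :=
    mul_le_mul_of_nonneg_right hb1.le (by positivity)
  have c3 : eps * ((1 - lam ^ 2) * p ^ 2)
      ≤ lam ^ 2 * (1 - lam ^ 2) / 200 * ((1 - lam ^ 2) * p ^ 2) :=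
    mul_le_mul_of_nonneg_right hb3.le (by positivity)
  have c4 : eps * ((1 - lam ^ 2) * r ^ 2)
      ≤ lam ^ 2 * (1 - lam ^ 2) * (1 - eta) / 200 * ((1 - lam ^ 2) * r ^ 2) :=
    mul_le_mul_of_nonneg_right hb2.le (by positivity)
  have cZ : 0 ≤ 2 * eps * (lam ^ 2 * z + (2 - lam ^ 2) * q - lam * (p + r)) ^ 2 := by positivity
  have n1 : 0 ≤ lam ^ 2 * (1 - lam ^ 2) ^ 2 * p ^ 2 := by positivity
  have n2 : 0 ≤ lam ^ 2 * (1 - lam ^ 2) ^ 2 * ((1 - eta) * r ^ 2) := by positivity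
  have n3 : 0 ≤ lam ^ 2 * (1 - lam ^ 2) ^ 2 * (eta * q ^ 2) := by positivity
  by_cases hall : p = 0 ∧ q = 0 ∧ r = 0
  · obtain ⟨h1, h2, h3⟩ := hall
    have hz0 : z ≠ 0 := fun h => hzero ⟨h1, h2, h3, h⟩
    have hz2 : 0 < z ^ 2 := pow_two_pos_of_ne_zero hz0
    rw [h1, h2, h3] at hscaled
    have hfin : 0 < 2 * eps * (lam ^ 4 * z ^ 2) :=
      mul_pos (by positivity) (mul_pos (pow_pos hlam 4) hz2)
    linarith only [hscaled, hfin]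
  · have hpos : 0 < lam ^ 2 * (1 - lam ^ 2) ^ 2 * (p ^ 2 + eta * q ^ 2 + (1 - eta) * r ^ 2) := by
      rcases not_and_or.mp hall with h | h'
      · have hp2 : 0 < p ^ 2 := pow_two_pos_of_ne_zero h
        have h5 := mul_pos hK hp2
        linarith only [h5, n2, n3]
      · rcases not_and_or.mp h' with h | h
        · have hq2 : 0 < q ^ 2 := pow_two_pos_of_ne_zero h
          have h5 := mul_pos (mul_pos hK heta) hq2
          linarith only [n1, n2, h5]
        · have hr2 : 0 < r ^ 2 := pow_two_pos_of_ne_zero h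
          have h5 := mul_pos (mul_pos hK h1e) hr2
          linarith only [n1, n3, h5]
    linarith only [hscaled, c1, c2, c3, c4, cZ, hpos, n1, n2]

theorem Qeps_posDef (lam eta : ℝ) (hlam : 0 < lam) (hlam1 : lam < 1)
    (heta : 0 < eta) (heta1 : eta < 1) :
    let Qc : Matrix (Fin 4) (Fin 4) ℝ :=
      !![(1 + lam) ^ 2 / 4, 0,
           eta * Real.sqrt (1 - lam) * (1 + lam) * Real.sqrt (1 + lam) / 4,
           (eta - 1) * (lam ^ 2 - 1) / 4;
         0, (1 - lam ^ 2) / 4, (eta - 1) * (lam ^ 2 - 1) / 4,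
           eta * (1 - lam) * Real.sqrt (1 - lam) * Real.sqrt (1 + lam) / 4;
         eta * Real.sqrt (1 - lam) * (1 + lam) * Real.sqrt (1 + lam) / 4,
           (eta - 1) * (lam ^ 2 - 1) / 4, (1 - lam ^ 2) / 4, 0;
         (eta - 1) * (lam ^ 2 - 1) / 4,
           eta * (1 - lam) * Real.sqrt (1 - lam) * Real.sqrt (1 + lam) / 4, 0,
           (1 - lam) ^ 2 / 4]
    let Qq : Matrix (Fin 4) (Fin 4) ℝ :=
      !![1, 0, 0, -1; 0, -1, 1, 0; 0, 1, -1, 0; -1, 0, 0, 1]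
    ∃ ε₀ > (0 : ℝ), ∀ ε : ℝ, 0 < ε → ε < ε₀ →
      (Qc + ε • Qq).PosDef ∧ (Qc + ε • Qq).trace = 1 := by
  intro Qc Qq
  have h1l : (0:ℝ) < 1 - lam := by linarith
  have h1l' : (0:ℝ) < 1 + lam := by linarith
  refine ⟨lam ^ 2 * (1 - lam ^ 2) * min eta (1 - eta) / 200, by
    have : (0:ℝ) < min eta (1 - eta) := lt_min heta (by linarith)
    have hm : (0:ℝ) < 1 - lam ^ 2 := by nlinarith
    positivity, fun ε hε hε' => ⟨Matrix.PosDef.of_dotProduct_mulVec_pos ?_ ?_, ?_⟩⟩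
  · -- IsHermitian
    ext i j
    fin_cases i <;> fin_cases j <;>
      simp [Qc, Qq, Matrix.conjTranspose_apply, Matrix.add_apply, Matrix.smul_apply]
  · -- positivity of the quadratic form
    intro x hx
    have hx' : ¬(x 0 = 0 ∧ x 1 = 0 ∧ x 2 = 0 ∧ x 3 = 0) := by
      rintro ⟨h0, h1, h2, h3⟩
      exact hx (funext fun i => by fin_cases i <;> assumption)
    have hu : (Real.sqrt (1 - lam) * Real.sqrt (1 + lam)) ^ 2 = 1 - lam ^ 2 := by
      rw [mul_pow, Real.sq_sqrt h1l.le, Real.sq_sqrt h1l'.le]; ring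
    have hu0 : 0 < Real.sqrt (1 - lam) * Real.sqrt (1 + lam) :=
      mul_pos (Real.sqrt_pos.mpr h1l) (Real.sqrt_pos.mpr h1l')
    have key := Qeps_aux lam eta ε (x 0) (x 1) (x 2) (x 3)
      (Real.sqrt (1 - lam) * Real.sqrt (1 + lam)) hlam hlam1 heta heta1 hu hu0 hε hε' hx'
    have hform : dotProduct (star x) ((Qc + ε • Qq).mulVec x) =
        ((1 + lam) ^ 2 * x 0 ^ 2 + (1 - lam ^ 2) * (x 1 ^ 2 + x 2 ^ 2)
          + (1 - lam) ^ 2 * x 3 ^ 2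
          + 2 * eta * (Real.sqrt (1 - lam) * Real.sqrt (1 + lam)) * (1 + lam) * x 0 * x 2
          + 2 * eta * (Real.sqrt (1 - lam) * Real.sqrt (1 + lam)) * (1 - lam) * x 1 * x 3
          + 2 * (1 - eta) * (1 - lam ^ 2) * (x 0 * x 3 + x 1 * x 2)) / 4
        + ε * ((x 0 - x 3) ^ 2 - (x 1 - x 2) ^ 2) := by
      simp [Qc, Qq, dotProduct, Matrix.mulVec, Fin.sum_univ_four,
        Matrix.add_apply, Matrix.smul_apply]
      ring
    rw [hform]
    exact key
  · -- trace
    simp [Qc, Qq, Matrix.trace, Matrix.diag, Fin.sum_univ_four, Matrix.add_apply,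
      Matrix.smul_apply]
    ring
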